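/- arXiv:1307.5505 — 4 statements merged into one kernel-verified Lean document; each statement's English description precedes it below -/
import Mathlib

section
/- Let R be a commutative ring and n ≥ 0. If every flat R-module has cotorsion dimension at most n, then every R-module G has cotorsion dimension at most n. -/
open CategoryTheory

universe u

section Defs

variable (R : Type u) [CommRing R]

/-- A linear map is a pure monomorphism if it is injective and stays injective
after tensoring with any module. -/
def IsPureMono {A B : Type u} [AddCommGroup A] [Module R A] [AddCommGroup B] [Module R B]
    (f : A →ₗ[R] B) : Prop :=
  Function.Injective f ∧
    ∀ (P : Type u) [AddCommGroup P] [Module R P],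
      Function.Injective (LinearMap.rTensor P f)

/-- A module is pure injective if it is injective with respect to pure monomorphisms. -/
def IsPureInjective (E : Type u) [AddCommGroup E] [Module R E] : Prop :=
  ∀ ⦃A B : Type u⦄ [AddCommGroup A] [Module R A] [AddCommGroup B] [Module R B]
    (f : A →ₗ[R] B), IsPureMono R f →
      ∀ g : A →ₗ[R] E, ∃ h : B →ₗ[R] E, h.comp f = g

/-- Vanishing of `Ext^n`. -/
def extVanish (n : ℕ) (M N : Type u) [AddCommGroup M] [Module R M]
    [AddCommGroup N] [Module R N] : Prop :=
  Subsingleton (((Ext R (ModuleCat.{u} R) n).obj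
    (Opposite.op (ModuleCat.of R M))).obj (ModuleCat.of R N))

/-- A module `C` is cotorsion if `Ext¹(F, C) = 0` for every flat module `F`. -/
def IsCotorsion (C : Type u) [AddCommGroup C] [Module R C] : Prop :=
  ∀ (F : Type u) [AddCommGroup F] [Module R F], Module.Flat R F →
    extVanish R 1 F C

/-- Short exact sequence of modules. -/
def IsShortExact {A B C : Type u} [AddCommGroup A] [Module R A] [AddCommGroup B] [Module R B]
    [AddCommGroup C] [Module R C] (f : A →ₗ[R] B) (g : B →ₗ[R] C) : Prop :=
  Function.Injective f ∧ Function.Surjective g ∧ LinearMap.ker g = LinearMap.range f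

/-- Pure short exact sequence. -/
def IsPureShortExact {A B C : Type u} [AddCommGroup A] [Module R A] [AddCommGroup B]
    [Module R B] [AddCommGroup C] [Module R C] (f : A →ₗ[R] B) (g : B →ₗ[R] C) : Prop :=
  IsShortExact R f g ∧
    ∀ (P : Type u) [AddCommGroup P] [Module R P],
      Function.Injective (LinearMap.rTensor P f)

/-- A cotorsion resolution `0 → M → C⁰ → ⋯ → Cⁿ → 0` of length `n`. -/
structure CotorsionResolution (M : Type u) [AddCommGroup M] [Module R M] (n : ℕ) where
  C : ℕ → Type u
  [acg : ∀ i, AddCommGroup (C i)]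
  [mod : ∀ i, Module R (C i)]
  f : M →ₗ[R] C 0
  d : ∀ i, C i →ₗ[R] C (i + 1)
  hf : Function.Injective f
  hd0 : LinearMap.ker (d 0) = LinearMap.range f
  hd : ∀ i, LinearMap.ker (d (i + 1)) = LinearMap.range (d i)
  hcot : ∀ i, IsCotorsion R (C i)
  htail : ∀ i, n < i → Subsingleton (C i)

/-- `M` has cotorsion dimension at most `n`. -/
def cotorsionDimLE (M : Type u) [AddCommGroup M] [Module R M] (n : ℕ) : Prop :=
  Nonempty (CotorsionResolution R M n)

/-- A pure injective resolution `0 → M → E⁰ → ⋯ → Eⁿ → 0` of length `n`,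
pure exact in each degree. -/
structure PureInjectiveResolution (M : Type u) [AddCommGroup M] [Module R M] (n : ℕ) where
  E : ℕ → Type u
  [acg : ∀ i, AddCommGroup (E i)]
  [mod : ∀ i, Module R (E i)]
  f : M →ₗ[R] E 0
  d : ∀ i, E i →ₗ[R] E (i + 1)
  hf : Function.Injective f
  hd0 : LinearMap.ker (d 0) = LinearMap.range f
  hd : ∀ i, LinearMap.ker (d (i + 1)) = LinearMap.range (d i)
  hpinj : ∀ i, IsPureInjective R (E i)
  htail : ∀ i, n < i → Subsingleton (E i)
  pure : ∀ (P : Type u) [AddCommGroup P] [Module R P],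
    Function.Injective (LinearMap.rTensor P f) ∧
    LinearMap.ker (LinearMap.rTensor P (d 0)) = LinearMap.range (LinearMap.rTensor P f) ∧
    ∀ i, LinearMap.ker (LinearMap.rTensor P (d (i + 1))) =
      LinearMap.range (LinearMap.rTensor P (d i))

/-- `M` has pure injective dimension at most `n`. -/
def pureInjDimLE (M : Type u) [AddCommGroup M] [Module R M] (n : ℕ) : Prop :=
  Nonempty (PureInjectiveResolution R M n)

end Defs

set_option maxHeartbeats 1000000

open LinearMap TensorProduct

private lemma aux_lTensor_injective_aux {R : Type u} [CommRing R]
    {A B C : Type u} [AddCommGroup A] [Module R A] [AddCommGroup B] [Module R B]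
    [AddCommGroup C] [Module R C] (f : A →ₗ[R] B) (g : B →ₗ[R] C)
    (hf : Function.Injective f) (hfg : Function.Exact f g) (hg : Function.Surjective g)
    [Module.Flat R C]
    (N : Type u) [AddCommGroup N] [Module R N]
    (Fm : Type u) [AddCommGroup Fm] [Module R Fm] [Module.Flat R Fm]
    (p : Fm →ₗ[R] N) (hp : Function.Surjective p) :
    Function.Injective (lTensor N f) := by
  rw [← LinearMap.ker_eq_bot, eq_bot_iff]
  intro x hx
  simp only [LinearMap.mem_ker] at hx
  have hιp : Function.Exact (LinearMap.ker p).subtype p := LinearMap.exact_subtype_ker_map p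
  obtain ⟨y, rfl⟩ := rTensor_surjective A hp x
  have comm : ∀ {X Y X' Y' : Type u} [AddCommGroup X] [Module R X] [AddCommGroup Y] [Module R Y]
      [AddCommGroup X'] [Module R X'] [AddCommGroup Y'] [Module R Y']
      (u : X →ₗ[R] X') (v : Y →ₗ[R] Y') (t : X ⊗[R] Y),
      rTensor Y' u (lTensor X v t) = lTensor X' v (rTensor Y u t) := by
    intro X Y X' Y' _ _ _ _ _ _ _ _ u v t
    have c1 := congrArg (fun z => z t) (rTensor_comp_lTensor (f := u) (g := v))
    have c2 := congrArg (fun z => z t) (lTensor_comp_rTensor (f := u) (g := v))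
    simp only [LinearMap.comp_apply] at c1 c2
    rw [c1, c2]
  have h1 : rTensor B p (lTensor Fm f y) = 0 := by
    rw [comm, hx]
  have hKB : Function.Exact (rTensor B (LinearMap.ker p).subtype) (rTensor B p) :=
    rTensor_exact B hιp hp
  obtain ⟨z, hz⟩ := (hKB _).mp h1
  have hgf : g ∘ₗ f = 0 := by
    ext a; exact hfg.apply_apply_eq_zero a
  have hzC : lTensor (LinearMap.ker p) g z = 0 := by
    have hinj : Function.Injective (rTensor C (LinearMap.ker p).subtype) :=
      Module.Flat.rTensor_preserves_injective_linearMap (LinearMap.ker p).subtype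
        (LinearMap.ker p).injective_subtype
    apply hinj
    rw [comm, hz, map_zero]
    have c3 := congrArg (fun w => w y) (lTensor_comp Fm g f)
    simp only [LinearMap.comp_apply] at c3
    rw [← c3, hgf, lTensor_zero, LinearMap.zero_apply]
  have hKA : Function.Exact (lTensor (LinearMap.ker p) f) (lTensor (LinearMap.ker p) g) :=
    lTensor_exact (LinearMap.ker p) hfg hg
  obtain ⟨w, hw⟩ := (hKA _).mp hzC
  have hinjF : Function.Injective (lTensor Fm f) :=
    Module.Flat.lTensor_preserves_injective_linearMap f hf
  have hFA : rTensor A (LinearMap.ker p).subtype w = y := by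
    apply hinjF
    rw [← comm, hw, hz]
  have hps : p ∘ₗ (LinearMap.ker p).subtype = 0 := by
    ext a; exact a.2
  rw [← hFA]
  have c4 := congrArg (fun z => z w) (rTensor_comp A p (LinearMap.ker p).subtype)
  simp only [LinearMap.comp_apply] at c4
  rw [Submodule.mem_bot, ← c4, hps, rTensor_zero, LinearMap.zero_apply]

/-- If `0 → A → B → C → 0` is exact with `C` flat, the sequence is pure:
tensoring `A → B` with any module stays injective. -/
private lemma aux_lTensor_injective {R : Type u} [CommRing R]
    {A B C : Type u} [AddCommGroup A] [Module R A] [AddCommGroup B] [Module R B]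
    [AddCommGroup C] [Module R C] (f : A →ₗ[R] B) (g : B →ₗ[R] C)
    (hf : Function.Injective f) (hfg : Function.Exact f g) (hg : Function.Surjective g)
    [Module.Flat R C]
    (N : Type u) [AddCommGroup N] [Module R N] :
    Function.Injective (lTensor N f) :=
  aux_lTensor_injective_aux f g hf hfg hg N (N →₀ R) (Finsupp.linearCombination R id)
    (Finsupp.linearCombination_id_surjective R N)

/-- Two-of-three: the kernel term of a short exact sequence of flat modules is flat. -/
private lemma aux_flat_ker {R : Type u} [CommRing R]
    {A B C : Type u} [AddCommGroup A] [Module R A] [AddCommGroup B] [Module R B]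
    [AddCommGroup C] [Module R C] (f : A →ₗ[R] B) (g : B →ₗ[R] C)
    (hf : Function.Injective f) (hfg : Function.Exact f g) (hg : Function.Surjective g)
    [Module.Flat R B] [Module.Flat R C] : Module.Flat R A := by
  rw [Module.Flat.iff_rTensor_injective']
  intro I
  rw [← LinearMap.ker_eq_bot, eq_bot_iff]
  intro x hx
  simp only [LinearMap.mem_ker] at hx
  have hinjf : Function.Injective (lTensor (↥I) f) :=
    aux_lTensor_injective f g hf hfg hg (↥I)
  have hinjB : Function.Injective (rTensor B I.subtype) :=
    Module.Flat.rTensor_preserves_injective_linearMap I.subtype I.injective_subtype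
  rw [Submodule.mem_bot]
  apply hinjf
  rw [map_zero]
  apply hinjB
  have c1 := congrArg (fun z => z x) (rTensor_comp_lTensor (f := I.subtype) (g := f))
  have c2 := congrArg (fun z => z x) (lTensor_comp_rTensor (f := I.subtype) (g := f))
  simp only [LinearMap.comp_apply] at c1 c2
  rw [c1, map_zero, ← c2, hx, map_zero]

lemma extVanish_iff_lift (R : Type u) [CommRing R] (m : ℕ)
    (F' : Type u) [AddCommGroup F'] [Module R F']
    (P : ProjectiveResolution (ModuleCat.of R F'))
    (N : Type u) [AddCommGroup N] [Module R N] :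
    extVanish R (m + 1) F' N ↔
      ∀ φ : P.complex.X (m + 1) ⟶ ModuleCat.of R N,
        P.complex.d (m + 2) (m + 1) ≫ φ = 0 →
          ∃ ψ : P.complex.X m ⟶ ModuleCat.of R N, P.complex.d (m + 1) m ≫ ψ = φ := by
  unfold extVanish
  set Y := ModuleCat.of R N
  have e := P.isoExt (R := R) (m + 1) Y
  set Q := P.complex.linearYonedaObj R Y with hQ
  have h1 : Subsingleton (((Ext R (ModuleCat.{u} R) (m+1)).obj
      (Opposite.op (ModuleCat.of R F'))).obj Y) ↔ Subsingleton (Q.homology (m+1)) :=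
    Equiv.subsingleton_congr e.toLinearEquiv.toEquiv
  rw [h1]
  have h2 : Subsingleton (Q.homology (m+1)) ↔ Q.ExactAt (m+1) := by
    rw [HomologicalComplex.exactAt_iff_isZero_homology]
    constructor
    · intro h; exact ModuleCat.isZero_of_subsingleton _
    · intro h
      have h0 : (𝟙 (Q.homology (m+1))) = 0 := h.eq_of_src _ _
      have hz : ∀ x : Q.homology (m+1), x = 0 := by
        intro x
        have hx : (𝟙 (Q.homology (m+1)) : Q.homology (m+1) ⟶ Q.homology (m+1)) x
            = (0 : Q.homology (m+1) ⟶ Q.homology (m+1)) x := by rw [h0]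
        simpa using hx
      exact ⟨fun a b => by rw [hz a, hz b]⟩
  rw [h2]
  rw [HomologicalComplex.exactAt_iff' Q m (m+1) (m+2) (by simp) (by simp)]
  rw [ShortComplex.moduleCat_exact_iff]
  constructor
  · intro hex φ hφ
    have hg : (HomologicalComplex.sc' Q m (m+1) (m+2)).g φ = P.complex.d (m + 2) (m + 1) ≫ φ := rfl
    obtain ⟨ψ, hψ⟩ := hex φ (by rw [hg, hφ]; rfl)
    refine ⟨ψ, ?_⟩
    have hf : (HomologicalComplex.sc' Q m (m+1) (m+2)).f ψ = P.complex.d (m + 1) m ≫ ψ := rfl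
    rw [← hf, hψ]
  · intro hlift φ hφ
    have hg : (HomologicalComplex.sc' Q m (m+1) (m+2)).g φ = P.complex.d (m + 2) (m + 1) ≫ φ := rfl
    obtain ⟨ψ, hψ⟩ := hlift φ (by rw [← hg, hφ]; rfl)
    exact ⟨ψ, by have hf : (HomologicalComplex.sc' Q m (m+1) (m+2)).f ψ = P.complex.d (m + 1) m ≫ ψ := rfl
                 rw [hf, hψ]⟩

/-- if every flat module has cotorsion dimension at most `n`
(i.e. `Ext^{n+1}(F', F) = 0` for all flat `F'`), then every module `G` has
cotorsion dimension at most `n` (i.e. `Ext^{n+1}(F', G) = 0` for all flat `F'`). -/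
theorem cotorsionDim_le_of_flat_cotorsionDim_le (R : Type u) [CommRing R] (n : ℕ)
    (hcd : ∀ (F : Type u) [AddCommGroup F] [Module R F], Module.Flat R F →
      ∀ (F' : Type u) [AddCommGroup F'] [Module R F'], Module.Flat R F' →
        extVanish R (n + 1) F' F) :
    ∀ (G : Type u) [AddCommGroup G] [Module R G],
      ∀ (F' : Type u) [AddCommGroup F'] [Module R F'], Module.Flat R F' →
        extVanish R (n + 1) F' G := by
  intro G _ _ F' _ _ hF'
  obtain ⟨P⟩ := (inferInstance : HasProjectiveResolution (ModuleCat.of R F')).out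
  -- flatness of the terms of the resolution
  haveI hflatX : ∀ i, Module.Flat R (P.complex.X i) := by
    intro i
    haveI : Module.Projective R (P.complex.X i) := by
      rw [IsProjective.iff_projective]
      exact (inferInstance : Projective (P.complex.X i))
    infer_instance
  -- the augmentation map
  let e0 := HomologicalComplex.singleObjXSelf (ComplexShape.down ℕ) 0 (ModuleCat.of R F')
  let g0 : P.complex.X 0 ⟶ ModuleCat.of R F' := P.π.f 0 ≫ e0.hom
  have hg0 : Function.Surjective g0 := by
    have h1 : Function.Surjective (P.π.f 0) :=
      (ModuleCat.epi_iff_surjective _).mp inferInstance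
    have h2 : Function.Surjective e0.hom :=
      (ModuleCat.epi_iff_surjective _).mp inferInstance
    exact h2.comp h1
  have hker0 : LinearMap.range (P.complex.d 1 0).hom = LinearMap.ker g0.hom := by
    have hex := P.exact₀
    rw [ShortComplex.moduleCat_exact_iff_range_eq_ker] at hex
    have : LinearMap.ker g0.hom = LinearMap.ker (P.π.f 0).hom := by
      ext x
      simp only [LinearMap.mem_ker]
      constructor
      · intro h
        have hinj : Function.Injective e0.hom :=
          (ModuleCat.mono_iff_injective _).mp inferInstance
        apply hinj
        rw [map_zero]; exact h
      · intro h
        show e0.hom (P.π.f 0 x) = 0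
        rw [h, map_zero]
    rw [this, ← hex]
  -- exactness within the complex
  have hkeri : ∀ i : ℕ, LinearMap.range (P.complex.d (i + 2) (i + 1)).hom
      = LinearMap.ker (P.complex.d (i + 1) i).hom := by
    intro i
    have hex := P.complex_exactAt_succ i
    rw [HomologicalComplex.exactAt_iff' P.complex (i + 2) (i + 1) i (by simp) (by simp)] at hex
    rw [ShortComplex.moduleCat_exact_iff_range_eq_ker] at hex
    exact hex
  -- flatness of syzygies
  have hsyz : ∀ i : ℕ, Module.Flat R ↥(LinearMap.range (P.complex.d (i + 1) i).hom) := by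
    intro i
    induction i with
    | zero =>
      rw [hker0]
      haveI : Module.Flat R ↑(ModuleCat.of R F') := hF'
      exact aux_flat_ker (LinearMap.ker g0.hom).subtype g0.hom (LinearMap.ker g0.hom).injective_subtype
        (LinearMap.exact_subtype_ker_map g0.hom) hg0
    | succ j ih =>
      rw [hkeri j]
      haveI : Module.Flat R ↥(LinearMap.range (P.complex.d (j + 1) j).hom) := ih
      exact aux_flat_ker (LinearMap.ker (P.complex.d (j + 1) j).hom).subtype
        (P.complex.d (j + 1) j).hom.rangeRestrict
        (LinearMap.ker (P.complex.d (j + 1) j).hom).injective_subtype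
        (LinearMap.exact_iff.mpr
          (by rw [LinearMap.ker_rangeRestrict, Submodule.range_subtype]))
        (LinearMap.surjective_rangeRestrict _)
  -- the (n+1)-st syzygy
  set Ω := LinearMap.range (P.complex.d (n + 1) n).hom with hΩ
  haveI hΩflat : Module.Flat R ↥Ω := hsyz n
  -- Ext^{n+1}(F', Ω) = 0 by hypothesis
  have hvan : extVanish R (n + 1) F' ↥Ω := hcd ↥Ω hΩflat F' hF'
  -- the corestriction of d (n+1) n is a cocycle
  let f₀ : P.complex.X (n + 1) ⟶ ModuleCat.of R ↥Ω := ModuleCat.ofHom (P.complex.d (n + 1) n).hom.rangeRestrict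
  have hf₀ : P.complex.d (n + 2) (n + 1) ≫ f₀ = 0 := by
    apply ModuleCat.hom_ext
    apply LinearMap.ext
    intro x
    apply Subtype.ext
    show P.complex.d (n + 1) n (P.complex.d (n + 2) (n + 1) x) = 0
    have hcc : (P.complex.d (n + 2) (n + 1) ≫ P.complex.d (n + 1) n) x
        = P.complex.d (n + 1) n (P.complex.d (n + 2) (n + 1) x) := rfl
    rw [← hcc, P.complex.d_comp_d]
    rfl
  obtain ⟨g, hg⟩ := (extVanish_iff_lift R n F' P ↥Ω).mp hvan f₀ hf₀
  -- conclude
  rw [extVanish_iff_lift R n F' P G]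
  intro φ hφ
  have hle : LinearMap.ker (P.complex.d (n + 1) n).hom ≤ LinearMap.ker φ.hom := by
    rw [← hkeri n]
    rintro x ⟨y, rfl⟩
    have := congrArg (fun (u : P.complex.X (n+2) ⟶ ModuleCat.of R G) => u y) hφ
    simpa using this
  let φbar : ↥Ω →ₗ[R] G :=
    (Submodule.liftQ (LinearMap.ker (P.complex.d (n + 1) n).hom) φ.hom hle).comp
      ((P.complex.d (n + 1) n).hom.quotKerEquivRange.symm : ↥Ω →ₗ[R] _)
  refine ⟨ModuleCat.ofHom (φbar.comp g.hom), ?_⟩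
  apply ModuleCat.hom_ext
  apply LinearMap.ext
  intro x
  show φbar (g (P.complex.d (n + 1) n x)) = φ x
  have hgx : g (P.complex.d (n + 1) n x) = f₀ x := by
    have := congrArg (fun (u : P.complex.X (n+1) ⟶ ModuleCat.of R ↥Ω) => u x) hg
    simpa using this
  rw [hgx]
  have hfx : (f₀ x : ↥Ω) = (P.complex.d (n + 1) n).hom.quotKerEquivRange
      (Submodule.Quotient.mk x) := by
    apply Subtype.ext
    rfl
  rw [hfx]
  show (Submodule.liftQ _ φ.hom hle) (((P.complex.d (n + 1) n).hom.quotKerEquivRange.symm)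
      ((P.complex.d (n + 1) n).hom.quotKerEquivRange (Submodule.Quotient.mk x))) = φ x
  rw [LinearEquiv.symm_apply_apply, Submodule.liftQ_apply]
end

section
/- Let R be a commutative ring and n ≥ 0. Suppose every flat R-module F satisfies Ext^{n+1}_R(F', F) = 0 for all flat R-modules F'. Then for every R-module G and every flat R-module F', Ext^{n+1}_R(F', G) = 0, provided G admits a short exact sequence 0 → C → P → G → 0 with P flat and C cotorsion. -/
open CategoryTheory

universe u

noncomputable section
open CategoryTheory
namespace ExtAux
variable (R : Type u) [CommRing R]

lemma subsingleton_iff_isZero (M : ModuleCat.{u} R) : Subsingleton M ↔ Limits.IsZero M :=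
  ⟨fun _ => ModuleCat.isZero_of_subsingleton M,
   fun h => @Equiv.subsingleton _ _
     (((h.iso (ModuleCat.isZero_of_subsingleton (ModuleCat.of R PUnit))).toLinearEquiv.toEquiv))
     inferInstance⟩

lemma extVanish_iff_concrete (m : ℕ) {X : ModuleCat.{u} R} (P : ProjectiveResolution X)
    (Y : ModuleCat.{u} R) :
    Subsingleton (((Ext R (ModuleCat.{u} R) (m + 1)).obj (Opposite.op X)).obj Y) ↔
      ∀ φ : P.complex.X (m + 1) ⟶ Y, P.complex.d (m + 2) (m + 1) ≫ φ = 0 →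
        ∃ ψ : P.complex.X m ⟶ Y, P.complex.d (m + 1) m ≫ ψ = φ := by
  rw [(Equiv.subsingleton_congr (P.isoExt (m+1) Y).toLinearEquiv.toEquiv),
    subsingleton_iff_isZero, ← HomologicalComplex.exactAt_iff_isZero_homology,
    HomologicalComplex.exactAt_iff' _ m (m+1) (m+2) (by simp) (by simp),
    ShortComplex.moduleCat_exact_iff]
  exact ⟨fun h φ hφ => h φ hφ, fun h φ hφ => h φ hφ⟩

/-- Factor a linear map through a surjection whose kernel it kills. -/
lemma factor_through_surjective {M X Y : Type u} [AddCommGroup M] [Module R M]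
    [AddCommGroup X] [Module R X] [AddCommGroup Y] [Module R Y]
    (g : M →ₗ[R] X) (hg : Function.Surjective g) (φ : M →ₗ[R] Y)
    (h : ∀ m, g m = 0 → φ m = 0) : ∃ ψ : X →ₗ[R] Y, ψ ∘ₗ g = φ := by
  have hker : LinearMap.ker g ≤ LinearMap.ker φ := fun m hm => h m hm
  refine ⟨(LinearMap.ker g).liftQ φ hker ∘ₗ
    (LinearMap.quotKerEquivOfSurjective g hg).symm.toLinearMap, ?_⟩
  ext m
  have h1 : (LinearMap.quotKerEquivOfSurjective g hg).symm (g m)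
      = Submodule.Quotient.mk m := by
    rw [LinearEquiv.symm_apply_eq]
    simp [LinearMap.quotKerEquivOfSurjective]
  simp [h1]

section Res
variable {X : ModuleCat.{u} R} (P : ProjectiveResolution X)

lemma res_aug_surjective : Function.Surjective (P.π.f 0 : P.complex.X 0 ⟶ X) :=
  (ModuleCat.epi_iff_surjective _).mp inferInstance

lemma res_ker_aug : LinearMap.ker (P.π.f 0).hom
    = LinearMap.range (P.complex.d 1 0).hom :=
  ((ShortComplex.moduleCat_exact_iff_range_eq_ker _).mp P.exact₀).symm

lemma res_ker_d (j : ℕ) : LinearMap.ker (P.complex.d (j+1) j).hom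
    = LinearMap.range (P.complex.d (j+2) (j+1)).hom :=
  ((ShortComplex.moduleCat_exact_iff_range_eq_ker _).mp (P.exact_succ j)).symm

instance res_modProjective (j : ℕ) : Module.Projective R (P.complex.X j) := by
  have : Projective (ModuleCat.of R (P.complex.X j)) := P.projective j
  exact (IsProjective.iff_projective _).mpr this

lemma res_flat (j : ℕ) : Module.Flat R (P.complex.X j) := inferInstance

end Res

lemma flat_ker {M X : Type u} [AddCommGroup M] [Module R M] [AddCommGroup X] [Module R X]
    (hM : Module.Flat R M) (hX : Module.Flat R X) (g : M →ₗ[R] X)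
    (hg : Function.Surjective g) : Module.Flat R (LinearMap.ker g) := by
  classical
  set K := LinearMap.ker g with hK
  let i : K →ₗ[R] M := K.subtype
  have hKinj : Function.Injective i := Submodule.injective_subtype K
  have hdualisurj : Function.Surjective (CharacterModule.dual (R := R) i) :=
    CharacterModule.dual_surjective_of_injective i hKinj
  have hdualginj : Function.Injective (CharacterModule.dual (R := R) g) := by
    intro c c' hcc
    ext x
    obtain ⟨m, rfl⟩ := hg x
    exact congrFun (congrArg DFunLike.coe hcc) m
  -- retraction of `dual g`
  have hXinj : Module.Injective R (CharacterModule X) :=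
    (Module.Flat.iff_characterModule_baer.mp hX).injective
  obtain ⟨r, hr⟩ := Module.Injective.extension_property _ _ _ _
    (CharacterModule.dual (R := R) g) hdualginj LinearMap.id
  -- p := id - dual g ∘ r  kills the kernel of dual i
  set p : CharacterModule M →ₗ[R] CharacterModule M :=
    LinearMap.id - (CharacterModule.dual (R := R) g) ∘ₗ r with hp
  have hgi : ∀ (c' : CharacterModule X) (k : K), c' (g (i k)) = 0 := by
    intro c' k
    have : g (i k) = 0 := k.2
    rw [this, map_zero]
  have hmid : ∀ c : CharacterModule M, CharacterModule.dual (R := R) i c = 0 →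
      ∃ c' : CharacterModule X, CharacterModule.dual (R := R) g c' = c := by
    intro c hc
    have hc0 : ∀ m ∈ K, c m = 0 := by
      intro m hm
      exact congrFun (congrArg DFunLike.coe hc) ⟨m, hm⟩
    have key : ∀ m m' : M, g m = g m' → c m = c m' := by
      intro m m' hmm
      have hmem : m - m' ∈ K := by
        rw [hK, LinearMap.mem_ker, map_sub, hmm, sub_self]
      have := hc0 _ hmem
      rw [map_sub, sub_eq_zero] at this
      exact this
    set s := Function.surjInv hg with hs
    have hgs : ∀ x, g (s x) = x := fun x => Function.surjInv_eq hg x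
    refine ⟨{ toFun := fun x => c (s x),
              map_zero' := ?_, map_add' := ?_ }, ?_⟩
    · have : c (s 0) = c 0 := key _ _ (by rw [hgs, map_zero])
      simpa using this
    · intro x y
      have : c (s (x + y)) = c (s x + s y) := key _ _ (by simp [hgs])
      simpa [map_add] using this
    · ext m
      exact key _ _ (hgs (g m))
  have hkerp : ∀ c : CharacterModule M, CharacterModule.dual (R := R) i c = 0 → p c = 0 := by
    intro c hc
    obtain ⟨c', rfl⟩ := hmid c hc
    have : r (CharacterModule.dual (R := R) g c') = c' :=
      congrFun (congrArg DFunLike.coe hr) c'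
    rw [hp]
    simp only [LinearMap.sub_apply, LinearMap.id_apply, LinearMap.comp_apply, this, sub_self]
  obtain ⟨v, hv⟩ := factor_through_surjective R (CharacterModule.dual (R := R) i)
    hdualisurj p hkerp
  have hiv : ∀ c, CharacterModule.dual (R := R) i (v c) = c := by
    intro c
    obtain ⟨d, rfl⟩ := hdualisurj c
    have h1 : v (CharacterModule.dual (R := R) i d) = p d :=
      congrFun (congrArg DFunLike.coe hv) d
    rw [h1]
    have h2 : CharacterModule.dual (R := R) i
        ((CharacterModule.dual (R := R) g) (r d)) = 0 := by
      ext k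
      exact hgi (r d) k
    rw [hp]
    simp only [LinearMap.sub_apply, LinearMap.id_apply, LinearMap.comp_apply, map_sub, h2,
      sub_zero]
  have hMinj : Module.Injective R (CharacterModule M) :=
    (Module.Flat.iff_characterModule_baer.mp hM).injective
  have : Module.Injective R (CharacterModule K) := by
    constructor
    intro A B _ _ _ _ f hf h
    obtain ⟨H, hH⟩ := hMinj.out f hf (v ∘ₗ h)
    refine ⟨(CharacterModule.dual (R := R) i) ∘ₗ H, fun a => ?_⟩
    have := hH a
    simp only [LinearMap.coe_comp, Function.comp_apply] at this ⊢
    rw [this, hiv]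
  exact Module.Flat.iff_characterModule_injective.mpr this

section Res2
variable {X : ModuleCat.{u} R} (P : ProjectiveResolution X)

lemma res_syzygy_flat (hX : Module.Flat R X) (j : ℕ) :
    Module.Flat R (LinearMap.range (P.complex.d (j+1) j).hom) := by
  induction j with
  | zero =>
      rw [← res_ker_aug]
      exact flat_ker R (res_flat R P 0) hX _ (res_aug_surjective R P)
  | succ j ih =>
      rw [← res_ker_d]
      have := flat_ker R (res_flat R P (j+1)) ih
        ((P.complex.d (j+1) j).hom.rangeRestrict)
        (LinearMap.surjective_rangeRestrict _)
      rwa [LinearMap.ker_rangeRestrict] at this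

lemma res_quot_flat (hX : Module.Flat R X) (j : ℕ) :
    Module.Flat R ((P.complex.X j : Type u) ⧸
      LinearMap.range (P.complex.d (j+1) j).hom) := by
  cases j with
  | zero =>
      rw [← res_ker_aug]
      letI := hX
      exact @Module.Flat.of_linearEquiv _ _ _ _ _ _ _ _ hX
        (LinearMap.quotKerEquivOfSurjective _ (res_aug_surjective R P))
  | succ j =>
      rw [← res_ker_d]
      letI := res_syzygy_flat R P hX j
      exact Module.Flat.of_linearEquiv
        (LinearMap.quotKerEquivRange (P.complex.d (j+1) j).hom)

end Res2

lemma ofInjective_symm_spec {A B : Type u} [AddCommGroup A] [Module R A]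
    [AddCommGroup B] [Module R B] (f : A →ₗ[R] B) (hf : Function.Injective f)
    (y : LinearMap.range f) : f ((LinearEquiv.ofInjective f hf).symm y) = y := by
  rw [← LinearEquiv.ofInjective_apply f (h := hf)]
  exact congrArg Subtype.val ((LinearEquiv.ofInjective f hf).apply_symm_apply y)


lemma splitting_of_extVanish {E C X : Type u} [AddCommGroup E] [Module R E]
    [AddCommGroup C] [Module R C] [AddCommGroup X] [Module R X]
    (f : C →ₗ[R] E) (g : E →ₗ[R] X)
    (hfinj : Function.Injective f) (hgsurj : Function.Surjective g)
    (hker : LinearMap.ker g = LinearMap.range f)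
    (h1 : extVanish R 1 X C) :
    ∃ s : X →ₗ[R] E, ∀ x, g (s x) = x := by
  let P : ProjectiveResolution (ModuleCat.of R X) := ProjectiveResolution.of _
  have h1' := (extVanish_iff_concrete R 0 P (ModuleCat.of R C)).mp h1
  haveI : @Epi _ _ (ModuleCat.of R E)
      (((ChainComplex.single₀ (ModuleCat R)).obj (ModuleCat.of R X)).X 0) (ModuleCat.ofHom g) := (ModuleCat.epi_iff_surjective _).mpr hgsurj
  let σ0 : (P.complex.X 0 : Type u) →ₗ[R] E :=
    (Projective.factorThru (P.π.f 0 : P.complex.X 0 ⟶ ModuleCat.of R X) (ModuleCat.ofHom g)).hom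
  have hσ0 : ∀ y, g (σ0 y) = P.π.f 0 y := fun y =>
    congrArg (fun (t : P.complex.X 0 ⟶ ModuleCat.of R X) => t y)
      (Projective.factorThru_comp (P.π.f 0 : P.complex.X 0 ⟶ ModuleCat.of R X)
        (ModuleCat.ofHom g))
  have hland : ∀ x : P.complex.X 1, σ0 (P.complex.d 1 0 x) ∈ LinearMap.range f := by
    intro x
    rw [← hker, LinearMap.mem_ker]
    refine (hσ0 _).trans ?_
    exact congrArg (fun (t : P.complex.X 1 ⟶ ModuleCat.of R X) => t x)
      P.complex_d_comp_π_f_zero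
  let α : (P.complex.X 1 : Type u) →ₗ[R] C :=
    (LinearEquiv.ofInjective f hfinj).symm.toLinearMap ∘ₗ
      LinearMap.codRestrict (LinearMap.range f)
        (σ0 ∘ₗ (P.complex.d 1 0).hom) hland
  have hfα : ∀ x, f (α x) = σ0 (P.complex.d 1 0 x) := fun x =>
    ofInjective_symm_spec R f hfinj _
  have hαcoc : P.complex.d 2 1 ≫ ModuleCat.ofHom α = 0 := by
    refine ModuleCat.hom_ext (LinearMap.ext ?_)
    intro y
    apply hfinj
    have h3 : P.complex.d 1 0 (P.complex.d 2 1 y) = 0 :=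
      congrArg (fun (t : P.complex.X 2 ⟶ P.complex.X 0) => t y) (P.complex.d_comp_d 2 1 0)
    show f (α (P.complex.d 2 1 y)) = f ((0 : P.complex.X 2 ⟶ ModuleCat.of R C) y)
    rw [hfα, h3, show (0 : P.complex.X 2 ⟶ ModuleCat.of R C) y = 0 from rfl,
      map_zero, map_zero]
  obtain ⟨β, hβ⟩ := h1' (ModuleCat.ofHom α) hαcoc
  let βL : (P.complex.X 0 : Type u) →ₗ[R] C := β.hom
  have hβ' : ∀ x, βL (P.complex.d 1 0 x) = α x := fun x =>
    congrArg (fun (t : P.complex.X 1 ⟶ ModuleCat.of R C) => t x) hβ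
  let σ' : (P.complex.X 0 : Type u) →ₗ[R] E := σ0 - f ∘ₗ βL
  have hσ'apply : ∀ y, σ' y = σ0 y - f (βL y) := fun y => rfl
  have hσ'd : ∀ x, σ' (P.complex.d 1 0 x) = 0 := by
    intro x
    rw [hσ'apply, hβ' x, hfα, sub_self]
  have hgσ' : ∀ y, g (σ' y) = P.π.f 0 y := by
    intro y
    rw [hσ'apply, map_sub]
    have hm : f (βL y) ∈ LinearMap.ker g := by rw [hker]; exact ⟨βL y, rfl⟩
    rw [LinearMap.mem_ker.mp hm, sub_zero, hσ0]
  have hπsurj : Function.Surjective (P.π.f 0).hom :=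
    res_aug_surjective R P
  obtain ⟨s, hs⟩ := factor_through_surjective R
    (P.π.f 0).hom hπsurj σ'
    (fun m hm => by
      have hmem : m ∈ LinearMap.range (P.complex.d 1 0).hom := by
        rw [← res_ker_aug]; exact hm
      obtain ⟨x, rfl⟩ := hmem
      exact hσ'd x)
  refine ⟨s, fun x => ?_⟩
  obtain ⟨y, rfl⟩ := hπsurj x
  have h4 := LinearMap.congr_fun hs y
  exact (congrArg g h4).trans (hgσ' y)

lemma extend_of_cotorsion {A B C : Type u} [AddCommGroup A] [Module R A]
    [AddCommGroup B] [Module R B] [AddCommGroup C] [Module R C]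
    (ι : A →ₗ[R] B) (hι : Function.Injective ι)
    (hflat : Module.Flat R (B ⧸ LinearMap.range ι)) (hC : IsCotorsion R C)
    (φ : A →ₗ[R] C) : ∃ ψ : B →ₗ[R] C, ψ ∘ₗ ι = φ := by
  classical
  set Q := B ⧸ LinearMap.range ι with hQ
  set w : A →ₗ[R] C × B := φ.prod (-ι) with hw
  set W : Submodule R (C × B) := LinearMap.range w with hW
  set E := (C × B) ⧸ W with hE
  set mk : C × B →ₗ[R] E := W.mkQ with hmk
  set f : C →ₗ[R] E := mk ∘ₗ LinearMap.inl R C B with hf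
  set hB : B →ₗ[R] E := mk ∘ₗ LinearMap.inr R C B with hhB
  -- the quotient map E → Q
  have hWker : W ≤ LinearMap.ker ((LinearMap.range ι).mkQ ∘ₗ LinearMap.snd R C B) := by
    rintro x ⟨a, rfl⟩
    simp only [LinearMap.mem_ker, LinearMap.coe_comp, Function.comp_apply]
    have : (LinearMap.snd R C B) (w a) = -ι a := rfl
    rw [this, map_neg, Submodule.mkQ_apply, neg_eq_zero, Submodule.Quotient.mk_eq_zero]
    exact ⟨a, rfl⟩
  set g : E →ₗ[R] Q := W.liftQ ((LinearMap.range ι).mkQ ∘ₗ LinearMap.snd R C B) hWker with hg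
  have hgmk : ∀ x : C × B, g (mk x) = (LinearMap.range ι).mkQ x.2 := fun x => rfl
  -- short exactness
  have hfinj : Function.Injective f := by
    intro c c' hcc
    have : mk (c - c', 0) = 0 := by
      have : ((c : C), (0 : B)) - (c', 0) = (c - c', 0) := by simp
      rw [← this, map_sub]
      exact sub_eq_zero.mpr hcc
    rw [hmk, Submodule.mkQ_apply, Submodule.Quotient.mk_eq_zero] at this
    obtain ⟨a, ha⟩ := this
    have ha1 : φ a = c - c' := congrArg Prod.fst ha
    have ha2 : -ι a = (0 : B) := congrArg Prod.snd ha
    have hia : ι a = 0 := by rw [← neg_eq_zero]; exact ha2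
    have : a = 0 := hι (by rw [hia, map_zero])
    rw [this, map_zero] at ha1
    exact sub_eq_zero.mp ha1.symm
  have hgsurj : Function.Surjective g := by
    intro q
    obtain ⟨b, rfl⟩ := Submodule.mkQ_surjective _ q
    exact ⟨mk (0, b), rfl⟩
  have hkerg : LinearMap.ker g = LinearMap.range f := by
    apply le_antisymm
    · rintro e he
      obtain ⟨x, rfl⟩ := Submodule.mkQ_surjective W e
      rw [LinearMap.mem_ker, hgmk] at he
      rw [Submodule.mkQ_apply, Submodule.Quotient.mk_eq_zero] at he
      obtain ⟨a, ha⟩ := he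
      refine ⟨x.1 + φ a, ?_⟩
      have hsub : f (x.1 + φ a) - mk x = mk ((x.1 + φ a, 0) - x) := by
        rw [map_sub]; rfl
      have hx2 : ((x.1 + φ a, (0 : B)) - x) = w a := by
        ext
        · show x.1 + φ a - x.1 = φ a
          exact add_sub_cancel_left x.1 (φ a)
        · show (0 : B) - x.2 = -ι a
          rw [ha, zero_sub]
      have hz : f (x.1 + φ a) - mk x = 0 := by
        rw [hsub, hx2]
        exact (Submodule.Quotient.mk_eq_zero _).mpr ⟨a, rfl⟩
      exact sub_eq_zero.mp hz
    · rintro e ⟨c, rfl⟩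
      rw [LinearMap.mem_ker]
      have : g (f c) = (LinearMap.range ι).mkQ 0 := rfl
      rw [this, map_zero]
  -- C is cotorsion: Ext^1(Q, C) = 0
  have h1 : extVanish R 1 Q C := hC Q hflat
  obtain ⟨s, hs⟩ := splitting_of_extVanish R f g hfinj hgsurj hkerg h1
  -- retraction of f
  have htland : ∀ e : E, e - s (g e) ∈ LinearMap.range f := by
    intro e
    rw [← hkerg, LinearMap.mem_ker, map_sub, hs, sub_self]
  set t : E →ₗ[R] E := LinearMap.id - s ∘ₗ g with ht
  have htapply : ∀ e, t e = e - s (g e) := fun e => rfl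
  set r : E →ₗ[R] C := (LinearEquiv.ofInjective f hfinj).symm.toLinearMap ∘ₗ
    LinearMap.codRestrict (LinearMap.range f) t (fun e => by rw [htapply]; exact htland e)
    with hr
  have hrf : ∀ c, r (f c) = c := by
    intro c
    apply hfinj
    have : f (r (f c)) = t (f c) := ofInjective_symm_spec R f hfinj _
    rw [this, htapply]
    have : g (f c) = 0 := by
      have : g (f c) = (LinearMap.range ι).mkQ 0 := rfl
      rw [this, map_zero]
    rw [this, map_zero, sub_zero]
  refine ⟨r ∘ₗ hB, ?_⟩
  apply LinearMap.ext
  intro a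
  have hba : hB (ι a) = f (φ a) := by
    have : (0, ι a) - ((φ a : C), (0 : B)) = -w a := by
      ext <;> simp [hw]
    rw [hhB, hf]
    show mk (0, ι a) = mk (φ a, 0)
    rw [← sub_eq_zero, ← map_sub, this, map_neg, neg_eq_zero, hmk, Submodule.mkQ_apply,
      Submodule.Quotient.mk_eq_zero]
    exact ⟨a, rfl⟩
  show r (hB (ι a)) = φ a
  rw [hba, hrf]

lemma extVanish_flat_cotorsion {X C : Type u} [AddCommGroup X] [Module R X]
    [AddCommGroup C] [Module R C] (hX : Module.Flat R X) (hC : IsCotorsion R C) (k : ℕ) :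
    extVanish R (k + 1) X C := by
  let P : ProjectiveResolution (ModuleCat.of R X) := ProjectiveResolution.of _
  refine (extVanish_iff_concrete R k P (ModuleCat.of R C)).mpr ?_
  intro φ hφ
  have hφ' : ∀ y, φ (P.complex.d (k+2) (k+1) y) = 0 := fun y =>
    congrArg (fun (t : P.complex.X (k+2) ⟶ ModuleCat.of R C) => t y) hφ
  have hkerk : ∀ m, (P.complex.d (k+1) k).hom.rangeRestrict m = 0 →
      φ.hom m = 0 := by
    intro m hm
    have hmker : m ∈ LinearMap.ker (P.complex.d (k+1) k).hom := by
      rw [← LinearMap.ker_rangeRestrict]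
      exact LinearMap.mem_ker.mpr hm
    rw [res_ker_d R P k] at hmker
    obtain ⟨y, rfl⟩ := hmker
    exact hφ' y
  obtain ⟨φbar, hφbar⟩ := factor_through_surjective R (P.complex.d (k+1) k).hom.rangeRestrict
    (LinearMap.surjective_rangeRestrict _) φ.hom hkerk
  have hquot := res_quot_flat R P hX k
  have hsub : Module.Flat R ((P.complex.X k : Type u) ⧸
      LinearMap.range ((LinearMap.range (P.complex.d (k+1) k).hom).subtype)) := by
    rw [Submodule.range_subtype]
    exact hquot
  obtain ⟨ψ0, hψ0⟩ := extend_of_cotorsion R (LinearMap.range (P.complex.d (k+1) k).hom).subtype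
    (Submodule.injective_subtype _) hsub hC φbar
  refine ⟨ModuleCat.ofHom ψ0, ?_⟩
  refine ModuleCat.hom_ext (LinearMap.ext ?_)
  intro x
  show ψ0 (P.complex.d (k+1) k x) = φ x
  have h6 := LinearMap.congr_fun hψ0 ((P.complex.d (k+1) k).hom.rangeRestrict x)
  have h7 := LinearMap.congr_fun hφbar x
  exact h6.trans h7

theorem main_aux (n : ℕ)
    (hyp : ∀ (F : Type u) [AddCommGroup F] [Module R F], Module.Flat R F →
      ∀ (F' : Type u) [AddCommGroup F'] [Module R F'], Module.Flat R F' →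
        extVanish R (n + 1) F' F)
    (G C P : Type u) [AddCommGroup G] [Module R G] [AddCommGroup C] [Module R C]
    [AddCommGroup P] [Module R P]
    (ι : C →ₗ[R] P) (p : P →ₗ[R] G) (hse : IsShortExact R ι p)
    (hP : Module.Flat R P) (hC : IsCotorsion R C) :
    ∀ (F' : Type u) [AddCommGroup F'] [Module R F'], Module.Flat R F' →
      extVanish R (n + 1) F' G := by
  intro F' _ _ hF'
  obtain ⟨hιinj, hpsurj, hkerp⟩ := hse
  let Q : ProjectiveResolution (ModuleCat.of R F') := ProjectiveResolution.of _
  refine (extVanish_iff_concrete R n Q (ModuleCat.of R G)).mpr ?_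
  intro φ hφ
  have hφ' : ∀ y, φ (Q.complex.d (n+2) (n+1) y) = 0 := fun y =>
    congrArg (fun (t : Q.complex.X (n+2) ⟶ ModuleCat.of R G) => t y) hφ
  haveI : Epi (ModuleCat.ofHom p) := (ModuleCat.epi_iff_surjective _).mpr hpsurj
  let φ' : (Q.complex.X (n+1) : Type u) →ₗ[R] P :=
    (Projective.factorThru (φ : Q.complex.X (n+1) ⟶ ModuleCat.of R G) (ModuleCat.ofHom p)).hom
  have hpφ' : ∀ y, p (φ' y) = φ y := fun y =>
    congrArg (fun (t : Q.complex.X (n+1) ⟶ ModuleCat.of R G) => t y)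
      (Projective.factorThru_comp (φ : Q.complex.X (n+1) ⟶ ModuleCat.of R G)
        (ModuleCat.ofHom p))
  have hland : ∀ y : Q.complex.X (n+2),
      φ' (Q.complex.d (n+2) (n+1) y) ∈ LinearMap.range ι := by
    intro y
    rw [← hkerp, LinearMap.mem_ker]
    exact (hpφ' _).trans (hφ' y)
  let α : (Q.complex.X (n+2) : Type u) →ₗ[R] C :=
    (LinearEquiv.ofInjective ι hιinj).symm.toLinearMap ∘ₗ
      LinearMap.codRestrict (LinearMap.range ι)
        (φ' ∘ₗ (Q.complex.d (n+2) (n+1)).hom) hland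
  have hια : ∀ y, ι (α y) = φ' (Q.complex.d (n+2) (n+1) y) := fun y =>
    ofInjective_symm_spec R ι hιinj _
  have hαcoc : Q.complex.d (n+3) (n+2) ≫ ModuleCat.ofHom α = 0 := by
    refine ModuleCat.hom_ext (LinearMap.ext ?_)
    intro z
    apply hιinj
    have hdd : Q.complex.d (n+2) (n+1) (Q.complex.d (n+3) (n+2) z) = 0 :=
      congrArg (fun (t : Q.complex.X (n+3) ⟶ Q.complex.X (n+1)) => t z)
        (Q.complex.d_comp_d (n+3) (n+2) (n+1))
    show ι (α (Q.complex.d (n+3) (n+2) z))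
        = ι ((0 : Q.complex.X (n+3) ⟶ ModuleCat.of R C) z)
    rw [hια, hdd, map_zero, show (0 : Q.complex.X (n+3) ⟶ ModuleCat.of R C) z = 0 from rfl,
      map_zero]
  have hExtC : extVanish R ((n+1) + 1) F' C := extVanish_flat_cotorsion R hF' hC (n+1)
  obtain ⟨β, hβ⟩ := (extVanish_iff_concrete R (n+1) Q (ModuleCat.of R C)).mp hExtC
    (ModuleCat.ofHom α) hαcoc
  let βL : (Q.complex.X (n+1) : Type u) →ₗ[R] C := β.hom
  have hβ' : ∀ y, βL (Q.complex.d (n+2) (n+1) y) = α y := fun y =>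
    congrArg (fun (t : Q.complex.X (n+2) ⟶ ModuleCat.of R C) => t y) hβ
  let φ'' : (Q.complex.X (n+1) : Type u) →ₗ[R] P := φ' - ι ∘ₗ βL
  have hφ''apply : ∀ y, φ'' y = φ' y - ι (βL y) := fun _ => rfl
  have hφ''coc : Q.complex.d (n+2) (n+1) ≫ ModuleCat.ofHom φ'' = 0 := by
    refine ModuleCat.hom_ext (LinearMap.ext ?_)
    intro y
    show φ'' (Q.complex.d (n+2) (n+1) y)
        = (0 : Q.complex.X (n+2) ⟶ ModuleCat.of R P) y
    rw [hφ''apply, hβ' y, hια, sub_self]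
    rfl
  have hExtP : extVanish R (n + 1) F' P := hyp P hP F' hF'
  obtain ⟨ψ', hψ'⟩ := (extVanish_iff_concrete R n Q (ModuleCat.of R P)).mp hExtP
    (ModuleCat.ofHom φ'') hφ''coc
  let ψ'L : (Q.complex.X n : Type u) →ₗ[R] P := ψ'.hom
  have hψ'' : ∀ y, ψ'L (Q.complex.d (n+1) n y) = φ'' y := fun y =>
    congrArg (fun (t : Q.complex.X (n+1) ⟶ ModuleCat.of R P) => t y) hψ'
  refine ⟨ModuleCat.ofHom (p ∘ₗ ψ'L), ?_⟩
  refine ModuleCat.hom_ext (LinearMap.ext ?_)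
  intro y
  show p (ψ'L (Q.complex.d (n+1) n y)) = φ y
  rw [hψ'' y, hφ''apply]
  have hpι : p (ι (βL y)) = 0 := by
    have : ι (βL y) ∈ LinearMap.ker p := by rw [hkerp]; exact ⟨βL y, rfl⟩
    exact LinearMap.mem_ker.mp this
  rw [map_sub, hpι, sub_zero]
  exact hpφ' y

end ExtAux

end

/-- if `Ext^{n+1}(F', F) = 0` for all flat modules `F', F`, then
`Ext^{n+1}(F', G) = 0` for all flat `F'` and all `G` admitting a short exact sequence
`0 → C → P → G → 0` with `P` flat and `C` cotorsion. -/
theorem ext_vanish_of_flat_precover (R : Type u) [CommRing R] (n : ℕ)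
    (hyp : ∀ (F : Type u) [AddCommGroup F] [Module R F], Module.Flat R F →
      ∀ (F' : Type u) [AddCommGroup F'] [Module R F'], Module.Flat R F' →
        extVanish R (n + 1) F' F)
    (G C P : Type u) [AddCommGroup G] [Module R G] [AddCommGroup C] [Module R C]
    [AddCommGroup P] [Module R P]
    (ι : C →ₗ[R] P) (p : P →ₗ[R] G) (hse : IsShortExact R ι p)
    (hP : Module.Flat R P) (hC : IsCotorsion R C) :
    ∀ (F' : Type u) [AddCommGroup F'] [Module R F'], Module.Flat R F' →
      extVanish R (n + 1) F' G := by
  exact ExtAux.main_aux R n hyp G C P ι p hse hP hC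
end

section
/- Let R be a commutative ring. If every R-module has pure injective dimension at most n, then every flat R-module has cotorsion dimension at most n. -/
open CategoryTheory

universe u

set_option maxHeartbeats 1000000
set_option synthInstance.maxHeartbeats 400000

section Aux

open TensorProduct LinearMap

/-- Helper instance: the tensor product of a submodule of a finsupp module with another
module is an `AddCommGroup` (this fails to be found by `inferInstance` due to
instance-path mismatches at reducible transparency). -/
noncomputable instance instACGsubFinsupp {R α N : Type u} [CommRing R] [AddCommGroup N]
    [Module R N] (p : Submodule R (α →₀ R)) : AddCommGroup (↥p ⊗[R] N) :=
  TensorProduct.addCommGroup (R := R) (M := ↥p) (N := N)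

variable {R : Type u} [CommRing R]

/-- Coefficientwise vanishing criterion in `(β →₀ R) ⊗ N`. -/
lemma sum_tmul_finsupp_eq_zero {β N : Type u} [AddCommGroup N] [Module R N]
    {ι : Type*} (s : Finset ι) (k : ι → (β →₀ R)) (m : ι → N)
    (h : ∀ t : β, ∑ p ∈ s, k p t • m p = 0) :
    ∑ p ∈ s, (k p) ⊗ₜ[R] (m p) = (0 : (β →₀ R) ⊗[R] N) := by
  classical
  apply (TensorProduct.finsuppScalarLeft R N β).injective
  rw [map_zero]
  ext t
  rw [map_sum, Finsupp.finset_sum_apply]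
  simp only [TensorProduct.finsuppScalarLeft_apply_tmul_apply, Finsupp.coe_zero,
    Pi.zero_apply]
  exact h t

lemma sum_tmul_finsupp_coeff_eq_zero {β N : Type u} [AddCommGroup N] [Module R N]
    {ι : Type*} (s : Finset ι) (k : ι → (β →₀ R)) (m : ι → N)
    (h : ∑ p ∈ s, (k p) ⊗ₜ[R] (m p) = (0 : (β →₀ R) ⊗[R] N)) (t : β) :
    ∑ p ∈ s, k p t • m p = 0 := by
  classical
  have h2 : ((TensorProduct.finsuppScalarLeft R N β) (∑ p ∈ s, (k p) ⊗ₜ[R] (m p))) t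
      = 0 := by rw [h, map_zero]; rfl
  rw [map_sum, Finsupp.finset_sum_apply] at h2
  simp only [TensorProduct.finsuppScalarLeft_apply_tmul_apply] at h2
  exact h2

/-- The kernel of a surjection from a free module onto a flat module is a pure
submodule. -/
lemma rTensor_injective_ker_free {α F : Type u} [AddCommGroup F] [Module R F]
    [Module.Flat R F] (π : (α →₀ R) →ₗ[R] F) (hπ : Function.Surjective π)
    (N : Type u) [AddCommGroup N] [Module R N] :
    Function.Injective (LinearMap.rTensor N (LinearMap.ker π).subtype) := by
  classical
  refine (injective_iff_map_eq_zero _).mpr ?_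
  intro z hz
  obtain ⟨s, rfl⟩ := TensorProduct.exists_finset z
  have hz' : ∑ p ∈ s, ((p.1 : α →₀ R)) ⊗ₜ[R] p.2 = (0 : (α →₀ R) ⊗[R] N) := by
    simpa [map_sum] using hz
  have hn : ∀ t : α, ∑ p ∈ s, (p.1 : α →₀ R) t • p.2 = 0 :=
    sum_tmul_finsupp_coeff_eq_zero s _ _ hz'
  set S : Finset α := s.sup (fun p => (p.1 : α →₀ R).support) with hSdef
  have hsupp : ∀ p ∈ s, ((p.1 : α →₀ R)).support ⊆ S := fun p hp => Finset.le_sup (f := fun p => ((p.1 : α →₀ R)).support) hp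
  set res : (α →₀ R) → (↥S →₀ R) := fun k => k.subtypeDomain (· ∈ S) with hres
  set emb : (↥S →₀ R) →ₗ[R] (α →₀ R) :=
    Finsupp.lmapDomain R R (Subtype.val : ↥S → α) with hembdef
  have hemb : ∀ (k : α →₀ R), k.support ⊆ S → emb (res k) = k := by
    intro k hk
    ext a
    by_cases ha : a ∈ S
    · rw [hembdef, Finsupp.lmapDomain_apply,
        show a = ((⟨a, ha⟩ : ↥S) : α) from rfl,
        Finsupp.mapDomain_apply Subtype.val_injective]
      rfl
    · rw [hembdef, Finsupp.lmapDomain_apply, Finsupp.mapDomain_notin_range]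
      · exact (Finsupp.notMem_support_iff.mp (fun hmem => ha (hk hmem))).symm
      · rw [Subtype.range_val]
        exact ha
  set f : (↥s →₀ R) →ₗ[R] (↥S →₀ R) :=
    Finsupp.linearCombination R (fun p : ↥s => res ((p : (LinearMap.ker π × N)).1 : α →₀ R))
    with hfdef
  set x : (↥S →₀ R) →ₗ[R] F := π ∘ₗ emb with hxdef
  have hxf : x ∘ₗ f = 0 := by
    apply Finsupp.lhom_ext
    intro p b
    have h1 : emb (res ((p : (LinearMap.ker π × N)).1 : α →₀ R)) =
        ((p : (LinearMap.ker π × N)).1 : α →₀ R) := hemb _ (hsupp _ p.2)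
    simp only [LinearMap.comp_apply, hfdef, Finsupp.linearCombination_single,
      LinearMap.zero_apply, map_smul, hxdef, h1]
    rw [LinearMap.mem_ker.mp (p : (LinearMap.ker π × N)).1.2]
    simp
  obtain ⟨κ, a, y, hxa, haf⟩ :=
    Module.Flat.exists_factorization_of_comp_eq_zero_of_free (R := R) (M := F) hxf
  obtain ⟨ylift, hy⟩ := Module.projective_lifting_property π y hπ
  set h : (↥S →₀ R) →ₗ[R] (α →₀ R) := emb - ylift ∘ₗ a with hhdef
  have hker : ∀ c, h c ∈ LinearMap.ker π := by
    intro c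
    rw [LinearMap.mem_ker, hhdef]
    have h1 : π (ylift (a c)) = y (a c) := LinearMap.congr_fun hy (a c)
    have h2 : x c = y (a c) := LinearMap.congr_fun hxa c
    simp only [LinearMap.sub_apply, LinearMap.comp_apply, map_sub, h1]
    rw [← h2]
    simp [hxdef, sub_self]
  set h' : (↥S →₀ R) →ₗ[R] LinearMap.ker π := h.codRestrict (LinearMap.ker π) hker
    with hh'def
  have hk : ∀ p ∈ s, p.1 = h' (res (p.1 : α →₀ R)) := by
    rintro p hp
    apply Subtype.ext
    have h1 : a (res (p.1 : α →₀ R)) = 0 := by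
      have h2 : (a ∘ₗ f) (Finsupp.single (⟨p, hp⟩ : ↥s) (1 : R)) = 0 := by
        rw [haf]; rfl
      simpa [hfdef, Finsupp.linearCombination_single] using h2
    show ((p.1 : α →₀ R)) = h (res (p.1 : α →₀ R))
    rw [hhdef]
    simp only [LinearMap.sub_apply, LinearMap.comp_apply, h1, map_zero, sub_zero]
    exact (hemb _ (hsupp _ hp)).symm
  have hz0 : ∑ p ∈ s, (res (p.1 : α →₀ R)) ⊗ₜ[R] p.2 = (0 : (↥S →₀ R) ⊗[R] N) := by
    apply sum_tmul_finsupp_eq_zero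
    intro t
    have : ∀ p : LinearMap.ker π × N, res (p.1 : α →₀ R) t = (p.1 : α →₀ R) ↑t := by
      intro p; rfl
    simp only [this]
    exact hn ↑t
  calc ∑ p ∈ s, p.1 ⊗ₜ[R] p.2
      = ∑ p ∈ s, (h' (res (p.1 : α →₀ R))) ⊗ₜ[R] p.2 :=
        Finset.sum_congr rfl (fun p hp => by rw [← hk p hp])
    _ = LinearMap.rTensor N h' (∑ p ∈ s, (res (p.1 : α →₀ R)) ⊗ₜ[R] p.2) := by
        rw [map_sum]; rfl
    _ = 0 := by rw [hz0, map_zero]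

/-- The kernel of a surjection from a projective module onto a flat module is a pure
submodule. -/
lemma rTensor_injective_ker_projective {P F : Type u} [AddCommGroup P] [Module R P]
    [Module.Projective R P] [AddCommGroup F] [Module R F] [Module.Flat R F]
    (π : P →ₗ[R] F) (hπ : Function.Surjective π)
    (N : Type u) [AddCommGroup N] [Module R N] :
    Function.Injective (LinearMap.rTensor N (LinearMap.ker π).subtype) := by
  set ρ : (P →₀ R) →ₗ[R] P := Finsupp.linearCombination R _root_.id with hρdef
  have hρ : Function.Surjective ρ := Finsupp.linearCombination_id_surjective R P
  obtain ⟨σ, hσ⟩ := Module.projective_lifting_property ρ (LinearMap.id) hρ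
  set π' : (P →₀ R) →ₗ[R] F := π ∘ₗ ρ with hπ'def
  have hπ' : Function.Surjective π' := hπ.comp hρ
  have inj' := rTensor_injective_ker_free π' hπ' N
  have hjmem : ∀ k : LinearMap.ker π, σ (k : P) ∈ LinearMap.ker π' := by
    intro k
    rw [LinearMap.mem_ker, hπ'def, LinearMap.comp_apply]
    have : ρ (σ (k : P)) = (k : P) := LinearMap.congr_fun hσ (k : P)
    rw [this]
    exact k.2
  set j : LinearMap.ker π →ₗ[R] LinearMap.ker π' :=
    (σ ∘ₗ (LinearMap.ker π).subtype).codRestrict _ hjmem with hjdef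
  have hrmem : ∀ k : LinearMap.ker π', ρ (k : P →₀ R) ∈ LinearMap.ker π := by
    intro k
    rw [LinearMap.mem_ker]
    exact k.2
  set r : LinearMap.ker π' →ₗ[R] LinearMap.ker π :=
    (ρ ∘ₗ (LinearMap.ker π').subtype).codRestrict _ hrmem with hrdef
  have hrj : r ∘ₗ j = LinearMap.id := by
    ext k
    have : ρ (σ (k : P)) = (k : P) := LinearMap.congr_fun hσ (k : P)
    exact this
  refine (injective_iff_map_eq_zero _).mpr ?_
  intro z hz
  have h1 : LinearMap.rTensor N (LinearMap.ker π').subtype (LinearMap.rTensor N j z)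
      = LinearMap.rTensor N σ (LinearMap.rTensor N (LinearMap.ker π).subtype z) := by
    rw [← LinearMap.rTensor_comp_apply, ← LinearMap.rTensor_comp_apply]
    rfl
  rw [hz, map_zero] at h1
  have h2 : LinearMap.rTensor N j z = 0 := inj' h1
  have h3 : z = LinearMap.rTensor N r (LinearMap.rTensor N j z) := by
    rw [← LinearMap.rTensor_comp_apply, hrj, LinearMap.rTensor_id, LinearMap.id_apply]
  rw [h3, h2, map_zero]

end Aux

section PureInjCotorsion

open CategoryTheory LinearMap

/-- A pure injective module is cotorsion. -/
lemma isCotorsion_of_isPureInjective (R : Type u) [CommRing R]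
    (E : Type u) [AddCommGroup E] [Module R E]
    (hE : IsPureInjective R E) : IsCotorsion R E := by
  intro F _ _ hF
  set F' : ModuleCat.{u} R := ModuleCat.of R F with hF'def
  set E' : ModuleCat.{u} R := ModuleCat.of R E with hE'def
  let P : ProjectiveResolution F' := (HasProjectiveResolution.out (Z := F')).some
  -- module-level data
  have hπsurj : Function.Surjective (P.π.f 0) :=
    (ModuleCat.epi_iff_surjective (P.π.f 0)).mp inferInstance
  have hexact0 : LinearMap.range (P.complex.d 1 0).hom = LinearMap.ker (P.π.f 0).hom :=
    (ShortComplex.moduleCat_exact_iff_range_eq_ker _).mp P.exact₀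
  have hexact1 : LinearMap.range (P.complex.d 2 1).hom = LinearMap.ker (P.complex.d 1 0).hom := by
    have := P.complex_exactAt_succ 0
    rw [HomologicalComplex.exactAt_iff' _ 2 1 0 (by simp) (by simp)] at this
    exact (ShortComplex.moduleCat_exact_iff_range_eq_ker _).mp this
  -- the complex Hom(P, E) is exact at 1
  have hex : (P.complex.linearYonedaObj R E').ExactAt 1 := by
    rw [HomologicalComplex.exactAt_iff' _ 0 1 2 (by simp) (by simp)]
    rw [ShortComplex.moduleCat_exact_iff]
    intro φ hφ
    let φ' : P.complex.X 1 ⟶ E' := φ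
    have hφ' : P.complex.d 2 1 ≫ φ' = 0 := hφ
    set d1 : ↑(P.complex.X 1) →ₗ[R] ↑(P.complex.X 0) := (P.complex.d 1 0).hom with hd1def
    set K : Submodule R (P.complex.X 0) := LinearMap.range d1 with hKdef
    have hle : LinearMap.ker d1 ≤ LinearMap.ker (φ'.hom : ↑(P.complex.X 1) →ₗ[R] E) := by
      intro v hv
      have hv' : v ∈ LinearMap.range (P.complex.d 2 1).hom := by
        rw [hexact1]; exact hv
      obtain ⟨w, hw⟩ := hv'
      rw [LinearMap.mem_ker, ← hw]
      exact LinearMap.congr_fun (congrArg ModuleCat.Hom.hom hφ') w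
    set φbar : ↥K →ₗ[R] E :=
      (Submodule.liftQ (LinearMap.ker d1) (φ'.hom : ↑(P.complex.X 1) →ₗ[R] E) hle) ∘ₗ
        ((LinearMap.quotKerEquivRange d1).symm.toLinearMap) with hφbardef
    have hφbar : ∀ (x : ↑(P.complex.X 1)) (h : d1 x ∈ K), φbar ⟨d1 x, h⟩ = φ' x := by
      intro x h
      rw [hφbardef]
      simp only [LinearMap.comp_apply, LinearEquiv.coe_toLinearMap]
      rw [LinearMap.quotKerEquivRange_symm_apply_image]
      rw [Submodule.mkQ_apply, Submodule.liftQ_apply]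
    -- K is a pure submodule of `P.complex.X 0`
    have hpm : IsPureMono R (K.subtype) := by
      constructor
      · exact Submodule.injective_subtype K
      · intro Q _ _
        have hproj : Module.Projective R ↑(P.complex.X 0) := by
          have hp : CategoryTheory.Projective (ModuleCat.of R ↑(P.complex.X 0)) :=
            P.projective 0
          exact (IsProjective.iff_projective _).mpr hp
        have hflat : Module.Flat R ↑F' := hF
        have hinj := @rTensor_injective_ker_projective
          R _ ↑(P.complex.X 0) ↑F' _ _ hproj _ _ hflat
          ((P.π.f 0).hom : ↑(P.complex.X 0) →ₗ[R] ↑F') (by exact hπsurj) Q _ _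
        have hKeq : K = LinearMap.ker ((P.π.f 0).hom : ↑(P.complex.X 0) →ₗ[R] ↑F') := by
          rw [hKdef]
          exact hexact0
        rw [hKeq]
        exact hinj
    obtain ⟨ψ, hψ⟩ := hE (K.subtype) hpm φbar
    refine ⟨(ModuleCat.ofHom ψ : P.complex.X 0 ⟶ E'), ?_⟩
    show P.complex.d 1 0 ≫ (ModuleCat.ofHom ψ : P.complex.X 0 ⟶ E') = φ'
    apply ModuleCat.hom_ext
    apply LinearMap.ext
    intro x
    have h1 : d1 x ∈ K := LinearMap.mem_range_self d1 x
    have h2 : ψ (K.subtype ⟨d1 x, h1⟩) = φbar ⟨d1 x, h1⟩ := LinearMap.congr_fun hψ _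
    have h3 : ψ (d1 x) = φ' x := by
      rw [show (d1 x : ↑(P.complex.X 0)) = K.subtype ⟨d1 x, h1⟩ from rfl, h2, hφbar x h1]
    exact h3
  have hzero : Limits.IsZero ((P.complex.linearYonedaObj R E').homology 1) := by
    rw [← HomologicalComplex.exactAt_iff_isZero_homology]
    exact hex
  have hsub : Subsingleton ((P.complex.linearYonedaObj R E').homology 1) := by
    have hid := (Limits.IsZero.iff_id_eq_zero _).mp hzero
    constructor
    intro a b
    have ha : a = (𝟙 ((P.complex.linearYonedaObj R E').homology 1)) a := rfl
    have hb : b = (𝟙 ((P.complex.linearYonedaObj R E').homology 1)) b := rfl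
    rw [ha, hb, hid]
    rfl
  set e := P.isoExt (R := R) 1 E'
  constructor
  intro a b
  have heq : e.hom a = e.hom b := Subsingleton.elim _ _
  have ha : a = e.inv (e.hom a) := by
    rw [show e.inv (e.hom a) = (e.hom ≫ e.inv) a from rfl, e.hom_inv_id]
    rfl
  have hb : b = e.inv (e.hom b) := by
    rw [show e.inv (e.hom b) = (e.hom ≫ e.inv) b from rfl, e.hom_inv_id]
    rfl
  rw [ha, hb, heq]

end PureInjCotorsion

/-- if every module has pure injective dimension at most `n`, then every
flat module has cotorsion dimension at most `n`. -/
theorem flat_cotorsionDim_le_of_pureInjDim_le (R : Type u) [CommRing R] (n : ℕ)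
    (hyp : ∀ (M : Type u) [AddCommGroup M] [Module R M], pureInjDimLE R M n) :
    ∀ (F : Type u) [AddCommGroup F] [Module R F], Module.Flat R F →
      cotorsionDimLE R F n := by
  intro F _ _ hF
  obtain ⟨res⟩ := hyp F
  letI := res.acg
  letI := res.mod
  exact ⟨{ C := res.E, f := res.f, d := res.d, hf := res.hf, hd0 := res.hd0,
           hd := res.hd,
           hcot := fun i => isCotorsion_of_isPureInjective R _ (res.hpinj i),
           htail := res.htail }⟩
end

section
/- Let R be a commutative ring and let 0 → G' → G → G'' → 0 be a short exact sequence of R-modules. Then there exists a short exact sequence 0 → F' → F → F'' → 0 of flat R-modules together with a morphism of short exact sequences (φ', φ, φ'') from it to the given sequence, with φ'' : F'' → G'' surjective and φ : F → G surjective. -/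
open CategoryTheory

universe u

/-- A cover of a short exact sequence `0 → G' → G → G'' → 0` by a short exact sequence
of flat modules, with surjective middle and right vertical maps. -/
structure FlatSESCover (R : Type u) [CommRing R]
    (G' G G'' : Type u) [AddCommGroup G'] [Module R G'] [AddCommGroup G] [Module R G]
    [AddCommGroup G''] [Module R G'']
    (iG : G' →ₗ[R] G) (pG : G →ₗ[R] G'') where
  F' : Type u
  F : Type u
  F'' : Type u
  [acg' : AddCommGroup F']
  [mod' : Module R F']
  [acg : AddCommGroup F]
  [mod : Module R F]
  [acg'' : AddCommGroup F'']
  [mod'' : Module R F'']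
  i : F' →ₗ[R] F
  p : F →ₗ[R] F''
  ses : IsShortExact R i p
  flat' : Module.Flat R F'
  flat : Module.Flat R F
  flat'' : Module.Flat R F''
  φ' : F' →ₗ[R] G'
  φ : F →ₗ[R] G
  φ'' : F'' →ₗ[R] G''
  comm_left : φ.comp i = iG.comp φ'
  comm_right : φ''.comp p = pG.comp φ
  surj_mid : Function.Surjective φ
  surj_right : Function.Surjective φ''

/-- every short exact sequence of modules can be covered by a short exact
sequence of flat modules, with surjective middle and right maps. -/
theorem exists_flat_ses_cover (R : Type u) [CommRing R]
    (G' G G'' : Type u) [AddCommGroup G'] [Module R G'] [AddCommGroup G] [Module R G]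
    [AddCommGroup G''] [Module R G'']
    (iG : G' →ₗ[R] G) (pG : G →ₗ[R] G'') (hse : IsShortExact R iG pG) :
    Nonempty (FlatSESCover R G' G G'' iG pG) := by
  classical
  -- free covers
  set F' := (G' →₀ R) with hF'
  set F'' := (G'' →₀ R) with hF''
  let φ' : F' →ₗ[R] G' := Finsupp.linearCombination R id
  let φ'' : F'' →ₗ[R] G'' := Finsupp.linearCombination R id
  have hφ' : Function.Surjective φ' := Finsupp.linearCombination_id_surjective R G'
  have hφ'' : Function.Surjective φ'' := Finsupp.linearCombination_id_surjective R G''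
  -- lift φ'' along the surjection pG
  obtain ⟨ψ, hψ⟩ := Module.projective_lifting_property pG φ'' hse.2.1
  let F := F' × F''
  let i : F' →ₗ[R] F := LinearMap.inl R F' F''
  let p : F →ₗ[R] F'' := LinearMap.snd R F' F''
  let φ : F →ₗ[R] G :=
    (iG.comp φ').comp (LinearMap.fst R F' F'') + ψ.comp p
  have hker : LinearMap.ker pG = LinearMap.range iG := hse.2.2
  refine ⟨⟨F', F, F'', i, p, ?_, inferInstance, inferInstance, inferInstance, φ', φ, φ'', ?_, ?_, ?_, hφ''⟩⟩
  · refine ⟨fun a b h => ?_, fun c => ⟨(0, c), rfl⟩, ?_⟩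
    · exact congrArg Prod.fst h
    · ext ⟨a, b⟩
      simp only [LinearMap.mem_ker, LinearMap.mem_range]
      constructor
      · intro h
        have hb : b = 0 := h
        exact ⟨a, by cases hb; rfl⟩
      · rintro ⟨y, hy⟩
        rw [← hy]; rfl
  · apply LinearMap.ext
    intro x
    show iG (φ' x) + ψ 0 = iG (φ' x)
    rw [map_zero, add_zero]
  · apply LinearMap.ext
    rintro ⟨a, b⟩
    have h1 : pG (ψ b) = φ'' b := LinearMap.congr_fun hψ b
    have h0 : pG (iG (φ' a)) = 0 := by
      have : iG (φ' a) ∈ LinearMap.ker pG := by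
        rw [hker]; exact ⟨φ' a, rfl⟩
      simpa using this
    show φ'' b = pG (iG (φ' a) + ψ b)
    rw [map_add, h0, h1, zero_add]
  · intro g
    obtain ⟨x'', hx''⟩ := hφ'' (pG g)
    have hψx : pG (ψ x'') = pG g := by
      rw [show pG (ψ x'') = φ'' x'' from LinearMap.congr_fun hψ x'', hx'']
    have hmem : g - ψ x'' ∈ LinearMap.ker pG := by simp [hψx]
    rw [hker] at hmem
    obtain ⟨g', hg'⟩ := hmem
    obtain ⟨x', hx'⟩ := hφ' g'
    refine ⟨(x', x''), ?_⟩
    show iG (φ' x') + ψ x'' = g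
    rw [hx', hg']
    abel
end
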